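/- Let θ ≥ 1 and let L_n = M_n ··· M_1 be a product of i.i.d. random nonnegative p×p matrices. Suppose there is a continuous function r_θ on the ℓ¹-unit simplex X with 0 < c₁ ≤ r_θ ≤ c₂ and E[|M x|^θ r_θ(Mx/|Mx|)] = λ(θ) r_θ(x) for all x ∈ X. Then E[|L_n 1|^θ] ≤ p^θ (c₂/c₁) λ(θ)^n for all n ≥ 1. -/

import Mathlib

open Finset MeasureTheory ProbabilityTheory

/-- `L_n = M_n ··· M_1`, product of random matrices (given as plain functions),
with `L_0 = Id`. -/
noncomputable def matProdF {Ω : Type*} {p : ℕ}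
    (M : ℕ → Ω → (Fin p → Fin p → ℝ)) : ℕ → Ω → (Fin p → Fin p → ℝ)
  | 0 => fun _ i j => if i = j then 1 else 0
  | n + 1 => fun ω i j => ∑ k, M (n + 1) ω i k * matProdF M n ω k j

namespace Stmt14Aux

variable {p : ℕ}

lemma matProdF_nonneg {Ω : Type*} {M : ℕ → Ω → (Fin p → Fin p → ℝ)}
    (hM : ∀ n ω i j, 0 ≤ M n ω i j) : ∀ n ω i j, 0 ≤ matProdF M n ω i j := by
  intro n
  induction n with
  | zero => intro ω i j; simp only [matProdF]; split <;> norm_num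
  | succ n ih =>
    intro ω i j
    exact Finset.sum_nonneg fun k _ => mul_nonneg (hM (n+1) ω i k) (ih ω k j)

lemma matProdF_eq_seq {Ω : Type*} (M : ℕ → Ω → (Fin p → Fin p → ℝ)) (n : ℕ) (ω : Ω) :
    matProdF M n ω
      = matProdF (fun k (A : ℕ → Fin p → Fin p → ℝ) => A k) n (fun k => M k ω) := by
  induction n with
  | zero => rfl
  | succ n ih => funext i j; simp only [matProdF, ih]

lemma matProdF_seq_congr (n : ℕ) (A B : ℕ → Fin p → Fin p → ℝ)
    (h : ∀ k, k ≤ n → A k = B k) :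
    matProdF (fun k (A : ℕ → Fin p → Fin p → ℝ) => A k) n A
      = matProdF (fun k (A : ℕ → Fin p → Fin p → ℝ) => A k) n B := by
  induction n with
  | zero => rfl
  | succ n ih =>
    funext i j
    simp only [matProdF]
    rw [h (n+1) le_rfl, ih (fun k hk => h k (hk.trans (Nat.le_succ n)))]

lemma measurable_matProdF_seq (n : ℕ) :
    Measurable (fun A : ℕ → Fin p → Fin p → ℝ =>
      matProdF (fun k (A : ℕ → Fin p → Fin p → ℝ) => A k) n A) := by
  induction n with
  | zero => exact measurable_const
  | succ n ih =>
    refine measurable_pi_lambda _ fun i => measurable_pi_lambda _ fun j => ?_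
    refine Finset.measurable_sum _ fun k _ => Measurable.mul ?_ ?_
    · exact (measurable_pi_apply k).comp ((measurable_pi_apply i).comp (measurable_pi_apply (n+1)))
    · exact (measurable_pi_apply j).comp ((measurable_pi_apply k).comp ih)

lemma measurable_matProdF {Ω : Type*} [MeasurableSpace Ω] {M : ℕ → Ω → (Fin p → Fin p → ℝ)}
    (hM : ∀ n, Measurable (M n)) (n : ℕ) : Measurable (matProdF M n) := by
  induction n with
  | zero => exact measurable_const
  | succ n ih =>
    refine measurable_pi_lambda _ fun i => measurable_pi_lambda _ fun j => ?_
    refine Finset.measurable_sum _ fun k _ => Measurable.mul ?_ ?_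
    · exact (measurable_pi_apply k).comp ((measurable_pi_apply i).comp (hM (n+1)))
    · exact (measurable_pi_apply j).comp ((measurable_pi_apply k).comp ih)

end Stmt14Aux

open Stmt14Aux

/-- Core estimate of Lemma 1 (L_arbit): for `θ ≥ 1` and i.i.d. random
nonnegative matrices, if `r_θ` is continuous on the ℓ¹-simplex with
`0 < c₁ ≤ r_θ ≤ c₂` and satisfies the eigenfunction identity
`E[|M x|^θ r_θ(Mx/|Mx|)] = λ(θ) r_θ(x)` on the simplex, then
`E[|L_n 1|^θ] ≤ p^θ (c₂/c₁) λ(θ)^n`. -/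
theorem stmt14 (p : ℕ) (hp : 0 < p) {Ω : Type*} [MeasurableSpace Ω]
    (μ : MeasureTheory.Measure Ω) [IsProbabilityMeasure μ]
    (M : ℕ → Ω → (Fin p → Fin p → ℝ))
    (hMnn : ∀ n ω i j, 0 ≤ M n ω i j)
    (hmeas : ∀ n, Measurable (M n))
    (hindep : iIndepFun M μ)
    (hident : ∀ n, IdentDistrib (M n) (M 0) μ μ)
    (θ : ℝ) (hθ : 1 ≤ θ) (lamθ : ℝ) (hlam : 0 < lamθ)
    (r : (Fin p → ℝ) → ℝ) (hr : Continuous r)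
    (c₁ c₂ : ℝ) (hc₁ : 0 < c₁)
    (hbounds : ∀ x : Fin p → ℝ, (∀ i, 0 ≤ x i) → (∑ i, x i) = 1 →
      c₁ ≤ r x ∧ r x ≤ c₂)
    (heig : ∀ x : Fin p → ℝ, (∀ i, 0 ≤ x i) → (∑ i, x i) = 1 →
      ∫ ω, (∑ i, ∑ j, M 0 ω i j * x j) ^ θ *
          r (fun i => (∑ j, M 0 ω i j * x j) / (∑ k, ∑ j, M 0 ω k j * x j)) ∂μ =
        lamθ * r x) :
    ∀ n : ℕ, 1 ≤ n →
      ∫ ω, (∑ i, ∑ j, matProdF M n ω i j) ^ θ ∂μ ≤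
        (p : ℝ) ^ θ * (c₂ / c₁) * lamθ ^ n := by

  have hrm : Measurable r := hr.measurable
  have hθ0 : θ ≠ 0 := by intro h; rw [h] at hθ; linarith
  have hθnn : (0:ℝ) ≤ θ := by linarith
  have hpR : (0:ℝ) < p := Nat.cast_pos.mpr hp
  set x₀ : Fin p → ℝ := fun _ => (p : ℝ)⁻¹ with hx₀def
  have hx₀nn : ∀ i, 0 ≤ x₀ i := fun i => by positivity
  have hx₀sum : (∑ i, x₀ i) = 1 := by
    simp only [hx₀def, Finset.sum_const, Finset.card_univ, Fintype.card_fin, nsmul_eq_mul]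
    exact mul_inv_cancel₀ (ne_of_gt hpR)
  -- the function g
  set g : (Fin p → ℝ) → ℝ := fun w => (∑ i, w i) ^ θ * r (fun i => w i / ∑ k, w k) with hgdef
  have hsummeas : Measurable fun w : Fin p → ℝ => ∑ i, w i :=
    Finset.measurable_sum _ fun i _ => measurable_pi_apply i
  have hgmeas : Measurable g := by
    refine Measurable.mul ((Real.continuous_rpow_const hθnn).measurable.comp hsummeas) ?_
    exact hrm.comp (measurable_pi_lambda _ fun i => (measurable_pi_apply i).div hsummeas)
  -- nonnegativity / lower bound for g on nonneg vectors
  have hglb : ∀ w : Fin p → ℝ, (∀ i, 0 ≤ w i) → (∑ i, w i) ^ θ * c₁ ≤ g w ∧ 0 ≤ g w := by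
    intro w hw
    have hSnn : (0:ℝ) ≤ ∑ i, w i := Finset.sum_nonneg fun i _ => hw i
    rcases eq_or_lt_of_le hSnn with hS | hS
    · constructor <;> simp [hgdef, ← hS, Real.zero_rpow hθ0]
    · have husum : (∑ i, w i / ∑ k, w k) = 1 := by
        rw [← Finset.sum_div]; exact div_self (ne_of_gt hS)
      have hunn : ∀ i, 0 ≤ w i / ∑ k, w k := fun i => div_nonneg (hw i) hSnn
      obtain ⟨h1, _⟩ := hbounds _ hunn husum
      have hrp : (0:ℝ) ≤ (∑ i, w i) ^ θ := Real.rpow_nonneg hSnn _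
      constructor
      · exact mul_le_mul_of_nonneg_left h1 hrp
      · exact mul_nonneg hrp (le_trans hc₁.le h1)
  -- the one-step identity (lintegral form)
  have hstep : ∀ w : Fin p → ℝ, (∀ i, 0 ≤ w i) →
      ∫⁻ ω, ENNReal.ofReal (g (fun i => ∑ j, M 0 ω i j * w j)) ∂μ
        = ENNReal.ofReal lamθ * ENNReal.ofReal (g w) := by
    intro w hw
    have hSnn : (0:ℝ) ≤ ∑ i, w i := Finset.sum_nonneg fun i _ => hw i
    rcases eq_or_lt_of_le hSnn with hS | hS
    · -- sum is zero hence w = 0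
      have hw0 : ∀ i, w i = 0 := by
        intro i
        exact (Finset.sum_eq_zero_iff_of_nonneg fun j _ => hw j).mp hS.symm i (Finset.mem_univ i)
      have hgw : g w = 0 := by
        simp only [hgdef, ← hS, Real.zero_rpow hθ0, zero_mul]
      have hmv : ∀ ω : Ω, (fun i => ∑ j, M 0 ω i j * w j) = (fun _ => (0:ℝ)) := by
        intro ω; funext i; simp [hw0]
      have hg0 : g (fun _ => (0:ℝ)) = 0 := by
        simp only [hgdef, Finset.sum_const, Finset.card_univ, smul_zero,
          Real.zero_rpow hθ0, zero_mul]
      simp only [hmv, hg0, hgw, ENNReal.ofReal_zero, lintegral_zero, mul_zero]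
    · set S : ℝ := ∑ i, w i with hSdef
      set u : Fin p → ℝ := fun i => w i / S with hudef
      have husum : (∑ i, u i) = 1 := by
        simp only [hudef]; rw [← Finset.sum_div]; exact div_self (ne_of_gt hS)
      have hunn : ∀ i, 0 ≤ u i := fun i => div_nonneg (hw i) hSnn
      set f : Ω → ℝ := fun ω => (∑ i, ∑ j, M 0 ω i j * u j) ^ θ *
          r (fun i => (∑ j, M 0 ω i j * u j) / (∑ k, ∑ j, M 0 ω k j * u j)) with hfdef
      have hfg : ∀ ω, f ω = g (fun i => ∑ j, M 0 ω i j * u j) := fun ω => rfl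
      have hmvnn : ∀ (y : Fin p → ℝ), (∀ i, 0 ≤ y i) → ∀ ω i, 0 ≤ ∑ j, M 0 ω i j * y j :=
        fun y hy ω i => Finset.sum_nonneg fun j _ => mul_nonneg (hMnn 0 ω i j) (hy j)
      have hfnn : ∀ ω, 0 ≤ f ω := fun ω => by
        rw [hfg]; exact (hglb _ (hmvnn u hunn ω)).2
      have hmvmeas : ∀ (y : Fin p → ℝ),
          Measurable fun ω => (fun i => ∑ j, M 0 ω i j * y j) := by
        intro y
        refine measurable_pi_lambda _ fun i => Finset.measurable_sum _ fun j _ => ?_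
        exact ((measurable_pi_apply j).comp ((measurable_pi_apply i).comp (hmeas 0))).mul_const _
      have hfmeas : Measurable f := by
        have := hgmeas.comp (hmvmeas u)
        exact this
      have hint := heig u hunn husum
      have hfint : Integrable f μ := by
        by_contra hni
        rw [show (∫ ω, (∑ i, ∑ j, M 0 ω i j * u j) ^ θ *
            r (fun i => (∑ j, M 0 ω i j * u j) / (∑ k, ∑ j, M 0 ω k j * u j)) ∂μ) = ∫ ω, f ω ∂μ
            from rfl, integral_undef hni] at hint
        have hru : c₁ ≤ r u := (hbounds u hunn husum).1
        nlinarith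
      have hflin : ∫⁻ ω, ENNReal.ofReal (f ω) ∂μ = ENNReal.ofReal (lamθ * r u) := by
        rw [← ofReal_integral_eq_lintegral_ofReal hfint (ae_of_all _ hfnn)]
        exact congrArg ENNReal.ofReal hint
      -- pointwise scaling
      have hscale : ∀ ω : Ω, g (fun i => ∑ j, M 0 ω i j * w j) = S ^ θ * f ω := by
        intro ω
        have hwu : ∀ i, w i = S * u i := by
          intro i; simp only [hudef]; field_simp
        have hmw : ∀ i, (∑ j, M 0 ω i j * w j) = S * ∑ j, M 0 ω i j * u j := by
          intro i
          rw [Finset.mul_sum]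
          exact Finset.sum_congr rfl fun j _ => by rw [hwu j]; ring
        have hsw : (∑ i, ∑ j, M 0 ω i j * w j) = S * ∑ i, ∑ j, M 0 ω i j * u j := by
          rw [Finset.mul_sum]; exact Finset.sum_congr rfl fun i _ => hmw i
        have hT : (0:ℝ) ≤ ∑ i, ∑ j, M 0 ω i j * u j :=
          Finset.sum_nonneg fun i _ => hmvnn u hunn ω i
        simp only [hgdef, hfg]
        rw [hsw]
        rw [Real.mul_rpow hSnn hT]
        have hratio : (fun i => S * (∑ j, M 0 ω i j * u j) / (S * ∑ k, ∑ j, M 0 ω k j * u j))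
            = fun i => (∑ j, M 0 ω i j * u j) / (∑ k, ∑ j, M 0 ω k j * u j) := by
          funext i; rw [mul_div_mul_left _ _ (ne_of_gt hS)]
        have hnum : (fun i => (∑ j, M 0 ω i j * w j) / (S * ∑ k, ∑ j, M 0 ω k j * u j))
            = fun i => (∑ j, M 0 ω i j * u j) / (∑ k, ∑ j, M 0 ω k j * u j) := by
          funext i; rw [hmw i, mul_div_mul_left _ _ (ne_of_gt hS)]
        rw [hnum]
        ring
      calc ∫⁻ ω, ENNReal.ofReal (g (fun i => ∑ j, M 0 ω i j * w j)) ∂μ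
          = ∫⁻ ω, ENNReal.ofReal (S ^ θ) * ENNReal.ofReal (f ω) ∂μ := by
            refine lintegral_congr fun ω => ?_
            rw [hscale ω, ENNReal.ofReal_mul (Real.rpow_nonneg hSnn _)]
        _ = ENNReal.ofReal (S ^ θ) * ENNReal.ofReal (lamθ * r u) := by
            have hof : Measurable fun ω => ENNReal.ofReal (f ω) :=
              ENNReal.measurable_ofReal.comp hfmeas
            rw [lintegral_const_mul _ hof, hflin]
        _ = ENNReal.ofReal lamθ * ENNReal.ofReal (g w) := by
            rw [← ENNReal.ofReal_mul (Real.rpow_nonneg hSnn _),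
              ← ENNReal.ofReal_mul hlam.le]
            congr 1
            have : g w = S ^ θ * r u := rfl
            rw [this]; ring
  -- the vector process v n = L_n x₀
  set v : ℕ → Ω → Fin p → ℝ := fun n ω i => ∑ j, matProdF M n ω i j * (p:ℝ)⁻¹ with hvdef
  have hvmeas : ∀ n, Measurable (v n) := by
    intro n
    refine measurable_pi_lambda _ fun i => Finset.measurable_sum _ fun j _ => ?_
    exact ((measurable_pi_apply j).comp
      ((measurable_pi_apply i).comp (measurable_matProdF hmeas n))).mul_const _
  have hvnn : ∀ n ω i, 0 ≤ v n ω i := fun n ω i =>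
    Finset.sum_nonneg fun j _ => mul_nonneg (matProdF_nonneg hMnn n ω i j) (by positivity)
  have hv0 : ∀ ω, v 0 ω = x₀ := by
    intro ω; funext i
    simp [hvdef, hx₀def, matProdF, ite_mul, Finset.sum_ite_eq]
  have hvsucc : ∀ n ω, v (n+1) ω = fun i => ∑ k, M (n+1) ω i k * v n ω k := by
    intro n ω; funext i
    show ∑ j, (∑ k, M (n + 1) ω i k * matProdF M n ω k j) * (p:ℝ)⁻¹
        = ∑ k, M (n+1) ω i k * ∑ j, matProdF M n ω k j * (p:ℝ)⁻¹
    simp only [Finset.sum_mul, Finset.mul_sum]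
    rw [Finset.sum_comm]
    exact Finset.sum_congr rfl fun k _ => Finset.sum_congr rfl fun j _ => by ring
  -- independence of M (n+1) and v n
  have hIndep : ∀ n : ℕ, IndepFun (M (n+1)) (v n) μ := by
    intro n
    have hdisj : Disjoint ({n+1} : Finset ℕ) (Finset.range (n+1)) := by
      simp [Finset.disjoint_left]
    have h := hindep.indepFun_finset {n+1} (Finset.range (n+1)) hdisj hmeas
    have hmem : (n+1) ∈ ({n+1} : Finset ℕ) := Finset.mem_singleton_self _
    set φ : (({n+1} : Finset ℕ) → Fin p → Fin p → ℝ) → (Fin p → Fin p → ℝ) :=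
      fun gg => gg ⟨n+1, hmem⟩ with hφdef
    set E : ((Finset.range (n+1) : Finset ℕ) → Fin p → Fin p → ℝ) → (ℕ → Fin p → Fin p → ℝ) :=
      fun gg k => if h : k ∈ Finset.range (n+1) then gg ⟨k, h⟩ else 0 with hEdef
    set ψ : ((Finset.range (n+1) : Finset ℕ) → Fin p → Fin p → ℝ) → (Fin p → ℝ) :=
      fun gg i => ∑ j, matProdF (fun k (A : ℕ → Fin p → Fin p → ℝ) => A k) n (E gg) i j * (p:ℝ)⁻¹
      with hψdef
    have hφm : Measurable φ := measurable_pi_apply _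
    have hEm : Measurable E := by
      refine measurable_pi_lambda _ fun k => ?_
      by_cases hk : k ∈ Finset.range (n+1)
      · simp only [hEdef, dif_pos hk]; exact measurable_pi_apply _
      · simp only [hEdef, dif_neg hk]; exact measurable_const
    have hψm : Measurable ψ := by
      refine measurable_pi_lambda _ fun i => Finset.measurable_sum _ fun j _ => ?_
      exact ((measurable_pi_apply j).comp ((measurable_pi_apply i).comp
        ((measurable_matProdF_seq n).comp hEm))).mul_const _
    have hcomp := h.comp hφm hψm
    have h1 : (φ ∘ fun a (i : ({n+1} : Finset ℕ)) => M i a) = M (n+1) := rfl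
    have h2 : (ψ ∘ fun a (i : (Finset.range (n+1) : Finset ℕ)) => M i a) = v n := by
      funext ω
      show ψ (fun i : (Finset.range (n+1) : Finset ℕ) => M i ω) = v n ω
      have hMeq : matProdF (fun k (A : ℕ → Fin p → Fin p → ℝ) => A k) n
          (E (fun i : (Finset.range (n+1) : Finset ℕ) => M i ω)) = matProdF M n ω := by
        rw [matProdF_eq_seq M n ω]
        refine matProdF_seq_congr n _ _ fun k hk => ?_
        have hk' : k ∈ Finset.range (n+1) := Finset.mem_range.mpr (Nat.lt_succ_of_le hk)
        simp only [hEdef, dif_pos hk']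
      funext i
      simp only [hψdef, hvdef, hMeq]
    rw [h1, h2] at hcomp
    exact hcomp
  -- measurable ofReal ∘ g
  have hogm : Measurable fun w : Fin p → ℝ => ENNReal.ofReal (g w) :=
    ENNReal.measurable_ofReal.comp hgmeas
  -- the inductive step
  have hkey : ∀ n : ℕ,
      ∫⁻ ω, ENNReal.ofReal (g (v (n+1) ω)) ∂μ
        = ENNReal.ofReal lamθ * ∫⁻ ω, ENNReal.ofReal (g (v n ω)) ∂μ := by
    intro n
    set F : (Fin p → Fin p → ℝ) × (Fin p → ℝ) → ENNReal :=
      fun q => ENNReal.ofReal (g (fun i => ∑ j, q.1 i j * q.2 j)) with hFdef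
    have hFm : Measurable F := by
      refine hogm.comp (measurable_pi_lambda _ fun i => Finset.measurable_sum _ fun j _ => ?_)
      exact Measurable.mul
        ((measurable_pi_apply j).comp ((measurable_pi_apply i).comp measurable_fst))
        ((measurable_pi_apply j).comp measurable_snd)
    have hpairm : Measurable fun ω => (M (n+1) ω, v n ω) := (hmeas (n+1)).prodMk (hvmeas n)
    have hpair : μ.map (fun ω => (M (n+1) ω, v n ω)) = (μ.map (M (n+1))).prod (μ.map (v n)) :=
      (indepFun_iff_map_prod_eq_prod_map_map (hmeas (n+1)).aemeasurable
        (hvmeas n).aemeasurable).mp (hIndep n)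
    have hae : ∀ᵐ w ∂(μ.map (v n)), ∀ i, 0 ≤ w i := by
      have hms : MeasurableSet {w : Fin p → ℝ | ∀ i, 0 ≤ w i} := by
        rw [Set.setOf_forall]
        exact MeasurableSet.iInter fun i =>
          measurableSet_le measurable_const (measurable_pi_apply i)
      rw [ae_map_iff (hvmeas n).aemeasurable hms]
      exact ae_of_all _ fun ω => hvnn n ω
    calc ∫⁻ ω, ENNReal.ofReal (g (v (n+1) ω)) ∂μ
        = ∫⁻ ω, F (M (n+1) ω, v n ω) ∂μ := by
          refine lintegral_congr fun ω => ?_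
          rw [hvsucc n ω]
      _ = ∫⁻ q, F q ∂(μ.map (fun ω => (M (n+1) ω, v n ω))) := (lintegral_map hFm hpairm).symm
      _ = ∫⁻ q, F q ∂((μ.map (M (n+1))).prod (μ.map (v n))) := by rw [hpair]
      _ = ∫⁻ w, ∫⁻ a, F (a, w) ∂(μ.map (M (n+1))) ∂(μ.map (v n)) :=
          lintegral_prod_symm F hFm.aemeasurable
      _ = ∫⁻ w, ENNReal.ofReal lamθ * ENNReal.ofReal (g w) ∂(μ.map (v n)) := by
          refine lintegral_congr_ae ?_
          filter_upwards [hae] with w hw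
          have hFam : Measurable fun a : Fin p → Fin p → ℝ => F (a, w) :=
            hFm.comp (measurable_id.prodMk measurable_const)
          rw [(hident (n+1)).map_eq, lintegral_map hFam (hmeas 0)]
          exact hstep w hw
      _ = ENNReal.ofReal lamθ * ∫⁻ w, ENNReal.ofReal (g w) ∂(μ.map (v n)) :=
          lintegral_const_mul _ hogm
      _ = ENNReal.ofReal lamθ * ∫⁻ ω, ENNReal.ofReal (g (v n ω)) ∂μ := by
          rw [lintegral_map hogm (hvmeas n)]
  -- main identity
  have hmain : ∀ n : ℕ,
      ∫⁻ ω, ENNReal.ofReal (g (v n ω)) ∂μ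
        = (ENNReal.ofReal lamθ) ^ n * ENNReal.ofReal (r x₀) := by
    intro n
    induction n with
    | zero =>
      have hgx₀ : g x₀ = r x₀ := by
        simp only [hgdef, hx₀sum, Real.one_rpow, one_mul, div_one]
      calc ∫⁻ ω, ENNReal.ofReal (g (v 0 ω)) ∂μ
          = ∫⁻ _, ENNReal.ofReal (g x₀) ∂μ := lintegral_congr fun ω => by rw [hv0 ω]
        _ = ENNReal.ofReal (g x₀) := by simp
        _ = (ENNReal.ofReal lamθ) ^ 0 * ENNReal.ofReal (r x₀) := by rw [hgx₀, pow_zero, one_mul]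
    | succ n ih =>
      rw [hkey n, ih, pow_succ]
      ring
  -- conclusion
  intro n _
  obtain ⟨hrx₀1, hrx₀2⟩ := hbounds x₀ hx₀nn hx₀sum
  have hc₂ : (0:ℝ) < c₂ := lt_of_lt_of_le hc₁ (hrx₀1.trans hrx₀2)
  have hSv : ∀ ω, (0:ℝ) ≤ ∑ i, v n ω i := fun ω => Finset.sum_nonneg fun i _ => hvnn n ω i
  have hSvmeas : Measurable fun ω => (∑ i, v n ω i) ^ θ :=
    (Real.continuous_rpow_const hθnn).measurable.comp (hsummeas.comp (hvmeas n))
  have hlb : (∫⁻ ω, ENNReal.ofReal ((∑ i, v n ω i) ^ θ) ∂μ) * ENNReal.ofReal c₁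
      ≤ ENNReal.ofReal (lamθ ^ n * c₂) := by
    calc (∫⁻ ω, ENNReal.ofReal ((∑ i, v n ω i) ^ θ) ∂μ) * ENNReal.ofReal c₁
        = ∫⁻ ω, ENNReal.ofReal ((∑ i, v n ω i) ^ θ) * ENNReal.ofReal c₁ ∂μ :=
          (lintegral_mul_const _ (ENNReal.measurable_ofReal.comp hSvmeas)).symm
      _ ≤ ∫⁻ ω, ENNReal.ofReal (g (v n ω)) ∂μ := by
          refine lintegral_mono fun ω => ?_
          rw [← ENNReal.ofReal_mul (Real.rpow_nonneg (hSv ω) _)]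
          exact ENNReal.ofReal_le_ofReal (hglb (v n ω) (hvnn n ω)).1
      _ = (ENNReal.ofReal lamθ) ^ n * ENNReal.ofReal (r x₀) := hmain n
      _ = ENNReal.ofReal (lamθ ^ n * r x₀) := by
          rw [ENNReal.ofReal_mul (by positivity), ← ENNReal.ofReal_pow hlam.le]
      _ ≤ ENNReal.ofReal (lamθ ^ n * c₂) := by
          exact ENNReal.ofReal_le_ofReal
            (mul_le_mul_of_nonneg_left hrx₀2 (by positivity))
  have hI : ∫⁻ ω, ENNReal.ofReal ((∑ i, v n ω i) ^ θ) ∂μ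
      ≤ ENNReal.ofReal (lamθ ^ n * c₂ / c₁) := by
    rw [ENNReal.ofReal_div_of_pos hc₁]
    refine (ENNReal.le_div_iff_mul_le (Or.inl ?_) (Or.inl ENNReal.ofReal_ne_top)).mpr hlb
    simp [hc₁, ENNReal.ofReal_eq_zero, not_le]
  -- rewrite the integrand
  have hrewrite : ∀ ω, (∑ i, ∑ j, matProdF M n ω i j) ^ θ
      = (p:ℝ) ^ θ * (∑ i, v n ω i) ^ θ := by
    intro ω
    have h1 : (∑ i, ∑ j, matProdF M n ω i j) = (p:ℝ) * ∑ i, v n ω i := by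
      simp only [hvdef]
      rw [Finset.mul_sum]
      refine Finset.sum_congr rfl fun i _ => ?_
      rw [Finset.mul_sum]
      refine Finset.sum_congr rfl fun j _ => ?_
      field_simp
    rw [h1, Real.mul_rpow hpR.le (hSv ω)]
  have hint_eq : ∫ ω, (∑ i, ∑ j, matProdF M n ω i j) ^ θ ∂μ
      = (p:ℝ) ^ θ * ∫ ω, (∑ i, v n ω i) ^ θ ∂μ := by
    rw [← integral_const_mul]
    exact integral_congr_ae (ae_of_all _ hrewrite)
  have hintv : ∫ ω, (∑ i, v n ω i) ^ θ ∂μ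
      = (∫⁻ ω, ENNReal.ofReal ((∑ i, v n ω i) ^ θ) ∂μ).toReal := by
    rw [integral_eq_lintegral_of_nonneg_ae
      (ae_of_all _ fun ω => Real.rpow_nonneg (hSv ω) θ) hSvmeas.aestronglyMeasurable]
  have hfin : ∫ ω, (∑ i, v n ω i) ^ θ ∂μ ≤ lamθ ^ n * c₂ / c₁ := by
    rw [hintv]
    calc (∫⁻ ω, ENNReal.ofReal ((∑ i, v n ω i) ^ θ) ∂μ).toReal
        ≤ (ENNReal.ofReal (lamθ ^ n * c₂ / c₁)).toReal :=
          ENNReal.toReal_mono ENNReal.ofReal_ne_top hI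
      _ = lamθ ^ n * c₂ / c₁ := ENNReal.toReal_ofReal (by positivity)
  rw [hint_eq]
  have hpθ : (0:ℝ) ≤ (p:ℝ) ^ θ := Real.rpow_nonneg hpR.le θ
  calc (p:ℝ) ^ θ * ∫ ω, (∑ i, v n ω i) ^ θ ∂μ
      ≤ (p:ℝ) ^ θ * (lamθ ^ n * c₂ / c₁) := mul_le_mul_of_nonneg_left hfin hpθ
    _ = (p:ℝ) ^ θ * (c₂ / c₁) * lamθ ^ n := by ring
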